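/- For a finite tree t on n vertices rooted at u, and any non-root node v with parent pa(v), the number of histories of t rooted at v equals the number of histories rooted at pa(v) multiplied by n_v^{(u)} / (n - n_v^{(u)}), where n_v^{(u)} is the size of the subtree of t rooted at v away from u. -/

import Mathlib

open scoped Classical
open SimpleGraph Finset

variable {V : Type*}

/-- A history of a graph `G`: an ordering of all vertices (no repeats) such that
every nonempty prefix induces a connected subgraph. -/
def IsHistory (G : SimpleGraph V) (l : List V) : Prop :=
  l.Nodup ∧ (∀ v : V, v ∈ l) ∧ ∀ k : ℕ, 1 ≤ k → (G.induce {v | v ∈ l.take k}).Connected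

/-- Number of histories of `G` rooted at (i.e. starting with) `u`. -/
noncomputable def nHist (G : SimpleGraph V) (u : V) : ℕ :=
  Nat.card {l : List V // IsHistory G l ∧ l.head? = some u}

/-- Total number of histories of `G`. -/
noncomputable def nHistAll (G : SimpleGraph V) : ℕ :=
  Nat.card {l : List V // IsHistory G l}

/-- Size of the subtree of `G` rooted at `v` away from `u`: the number of vertices `w`
such that every walk from `w` to `u` passes through `v`. -/
noncomputable def subtreeSize (G : SimpleGraph V) (u v : V) : ℕ :=
  Nat.card {w : V | ∀ p : G.Walk w u, v ∈ p.support}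

/-! ### Auxiliary machinery -/

section Aux

variable {G : SimpleGraph V}

/-- Prefix-connectivity: every nonempty prefix induces a connected subgraph. -/
def PrefConn (G : SimpleGraph V) (l : List V) : Prop :=
  ∀ k : ℕ, 1 ≤ k → (G.induce {x | x ∈ l.take k}).Connected

lemma isHistory_iff {l : List V} :
    IsHistory G l ↔ l.Nodup ∧ (∀ v : V, v ∈ l) ∧ PrefConn G l := Iff.rfl

lemma reachable_induce_of_support {s : Set V} {w x : V} (q : G.Walk w x)
    (h : ∀ y ∈ q.support, y ∈ s) (hw : w ∈ s) (hx : x ∈ s) :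
    (G.induce s).Reachable ⟨w, hw⟩ ⟨x, hx⟩ := by
  induction q with
  | nil => exact Reachable.refl _
  | @cons a b c hab q ih =>
    have hb : b ∈ s := h b (by simp [Walk.support_cons])
    have h1 : (G.induce s).Adj ⟨a, hw⟩ ⟨b, hb⟩ := hab
    exact h1.reachable.trans
      (ih (fun y hy => h y (by simp [Walk.support_cons, hy])) hb hx)

lemma induce_connected_iff_reachIn {s : Set V} :
    (G.induce s).Connected ↔
      s.Nonempty ∧ ∀ w ∈ s, ∀ x ∈ s, ∃ q : G.Walk w x, ∀ y ∈ q.support, y ∈ s := by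
  constructor
  · intro hc
    have hne : s.Nonempty := by
      obtain ⟨⟨y, hy⟩⟩ := hc.nonempty
      exact ⟨y, hy⟩
    refine ⟨hne, fun w hw x hx => ?_⟩
    obtain ⟨q⟩ := hc.preconnected ⟨w, hw⟩ ⟨x, hx⟩
    refine ⟨q.map (Embedding.induce s).toHom, fun y hy => ?_⟩
    replace hy : y ∈ (q.map (Embedding.induce s).toHom).support := hy
    rw [SimpleGraph.Walk.support_map] at hy
    obtain ⟨⟨z, hz⟩, _, rfl⟩ := List.mem_map.mp hy
    exact hz
  · rintro ⟨hne, hreach⟩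
    rw [connected_iff]
    refine ⟨fun a b => ?_, hne.to_subtype⟩
    obtain ⟨q, hq⟩ := hreach a a.2 b b.2
    exact reachable_induce_of_support q hq a.2 b.2

section Cross

variable {A : Set V} {v p : V}
  (hcross : ∀ ⦃x y : V⦄, G.Adj x y → x ∈ A → y ∉ A → x = v ∧ y = p)

include hcross

lemma mem_support_of_crossing : ∀ {y x : V} (q : G.Walk y x), y ∉ A → x ∈ A →
    v ∈ q.support := by
  intro y x q
  induction q with
  | nil => intro h1 h2; exact absurd h2 h1
  | @cons a b c hab q ih =>
    intro h1 h2
    by_cases hb : b ∈ A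
    · have hbv : b = v := (hcross (G.adj_symm hab) hb h1).1
      simp [Walk.support_cons, ← hbv, Walk.start_mem_support]
    · simp [Walk.support_cons, ih hb h2]

lemma support_subset_of_nodup : ∀ {w x : V} (q : G.Walk w x), q.support.Nodup →
    w ∈ A → x ∈ A → ∀ y ∈ q.support, y ∈ A := by
  intro w x q
  induction q with
  | nil => intro _ hw _ y hy; simp [Walk.support_nil] at hy; subst hy; exact hw
  | @cons a b c hab q ih =>
    intro hnd ha hc y hy
    rw [Walk.support_cons] at hnd hy
    obtain ⟨hna, hnd'⟩ := List.nodup_cons.mp hnd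
    rw [List.mem_cons] at hy
    by_cases hb : b ∈ A
    · rcases hy with hy | hy
      · exact hy ▸ ha
      · exact ih hnd' hb hc y hy
    · obtain ⟨hav, hbp⟩ := hcross hab ha hb
      have hvq : v ∈ q.support := mem_support_of_crossing hcross q hb hc
      exact absurd (hav ▸ hvq) hna

end Cross

/-! ### List lemmas -/

lemma exists_take_filter (qf : V → Bool) (l : List V) :
    ∀ k : ℕ, ∃ j, (l.take j).filter qf = (l.filter qf).take k ∧
      (1 ≤ k → l.filter qf ≠ [] → 1 ≤ j) := by
  induction l with
  | nil => intro k; exact ⟨0, by simp, by simp⟩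
  | cons x xs ih =>
    intro k
    by_cases hx : qf x
    · cases k with
      | zero => exact ⟨0, by simp, by omega⟩
      | succ k' =>
        obtain ⟨j, h1, _⟩ := ih k'
        exact ⟨j + 1, by simp [hx, h1], fun _ _ => by omega⟩
    · obtain ⟨j, h1, h2⟩ := ih k
      refine ⟨j + 1, ?_, fun _ _ => by omega⟩
      simp [hx, h1]

lemma head_mem_take {l : List V} {j : ℕ} (hj : 1 ≤ j) {hd : V}
    (h : l.head? = some hd) : hd ∈ l.take j := by
  cases l with
  | nil => simp at h
  | cons a l =>
    cases j with
    | zero => omega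
    | succ j => simp at h; simp [h]

lemma take_one_of_head? {l : List V} {hd : V} (h : l.head? = some hd) :
    l.take 1 = [hd] := by
  cases l with
  | nil => simp at h
  | cons a l => simp at h; simp [h]

lemma head?_filter {l : List V} {qf : V → Bool} {hd : V} (h : l.head? = some hd)
    (hq : qf hd = true) : (l.filter qf).head? = some hd := by
  cases l with
  | nil => simp at h
  | cons a l => simp at h; subst h; simp [List.filter_cons, hq]

/-! ### Prefix connectivity of filtered lists -/

lemma PrefConn.filter' {A : Set V} {v p : V}
    (hcross : ∀ ⦃x y : V⦄, G.Adj x y → x ∈ A → y ∉ A → x = v ∧ y = p)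
    {qf : V → Bool} (hq : ∀ x, qf x = true ↔ x ∈ A)
    {l : List V} (hl : PrefConn G l) (hne : l.filter qf ≠ []) :
    PrefConn G (l.filter qf) := by
  intro k hk
  obtain ⟨j, hj1, hj2⟩ := exists_take_filter qf l k
  have hjpos : 1 ≤ j := hj2 hk hne
  have hs := hl j hjpos
  have hset : {x | x ∈ (l.filter qf).take k} = {x | x ∈ l.take j} ∩ A := by
    rw [← hj1]
    ext z
    simp [List.mem_filter, hq]
  rw [hset]
  rw [induce_connected_iff_reachIn] at hs ⊢
  obtain ⟨-, hreach⟩ := hs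
  constructor
  · obtain ⟨b, hb⟩ : ∃ b, (l.filter qf).head? = some b := by
      cases hfq : l.filter qf with
      | nil => exact absurd hfq hne
      | cons a t => exact ⟨a, by simp⟩
    have hbmem : b ∈ (l.take j).filter qf := by rw [hj1]; exact head_mem_take hk hb
    exact ⟨b, (List.mem_filter.mp hbmem).1, (hq b).mp (List.of_mem_filter hbmem)⟩
  · intro w hw z hz
    obtain ⟨qwx, hsup⟩ := hreach w hw.1 z hz.1
    refine ⟨(qwx.toPath : G.Walk w z), fun y hy => ?_⟩
    have hy' : y ∈ qwx.support := Walk.support_toPath_subset qwx hy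
    exact ⟨hsup y hy', support_subset_of_nodup hcross (qwx.toPath : G.Walk w z)
      qwx.toPath.prop.support_nodup hw.2 hz.2 y hy⟩

lemma head_filter_eq {A : Set V} {v p : V}
    (hcross : ∀ ⦃x y : V⦄, G.Adj x y → x ∈ A → y ∉ A → x = v ∧ y = p)
    {qf : V → Bool} (hq : ∀ x, qf x = true ↔ x ∈ A)
    {l : List V} (hl : PrefConn G l) {hd b : V} (hhd : l.head? = some hd)
    (hdA : hd ∈ A) (hb : (l.filter (fun x => !qf x)).head? = some b) : b = p := by
  have hne : l.filter (fun x => !qf x) ≠ [] := by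
    intro h0; rw [h0] at hb; simp at hb
  obtain ⟨j, hj1, hj2⟩ := exists_take_filter (fun x => !qf x) l 1
  have hjpos : 1 ≤ j := hj2 le_rfl hne
  have h1 : (l.take j).filter (fun x => !qf x) = [b] := by
    rw [hj1, take_one_of_head? hb]
  have hs := hl j hjpos
  have hbmem : b ∈ l.take j := by
    have hb1 : b ∈ (l.take j).filter (fun x => !qf x) := by rw [h1]; simp
    exact (List.mem_filter.mp hb1).1
  have hbA : b ∉ A := by
    have hb1 : b ∈ (l.take j).filter (fun x => !qf x) := by rw [h1]; simp
    have hb2 := List.of_mem_filter hb1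
    simp only [Bool.not_eq_true'] at hb2
    rw [← hq b]
    simp [hb2]
  have hhds : hd ∈ l.take j := head_mem_take hjpos hhd
  have hbhd : b ≠ hd := fun h0 => hbA (h0 ▸ hdA)
  rw [induce_connected_iff_reachIn] at hs
  obtain ⟨qw, hsup⟩ := hs.2 b hbmem hd hhds
  cases qw with
  | nil => exact absurd rfl hbhd
  | cons ha qw' =>
    rename_i y
    have hy : y ∈ l.take j := hsup y (by simp [Walk.support_cons, Walk.start_mem_support])
    have hyA : y ∈ A := by
      by_contra hyA
      have hqy : qf y = false := by
        rw [← Bool.not_eq_true]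
        intro hc
        exact hyA ((hq y).mp hc)
      have hymem : y ∈ (l.take j).filter (fun x => !qf x) :=
        List.mem_filter.mpr ⟨hy, by simp [hqy]⟩
      rw [h1] at hymem
      simp at hymem
      exact ha.ne hymem.symm
    exact (hcross (G.adj_symm ha) hyA hbA).2

lemma PrefConn.join {qf : V → Bool} {l : List V} {v p : V}
    (h1 : PrefConn G (l.filter qf)) (h2 : PrefConn G (l.filter (fun x => !qf x)))
    (hv : (l.filter qf).head? = some v)
    (hp : (l.filter (fun x => !qf x)).head? = some p)
    (hadj : G.Adj v p) : PrefConn G l := by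
  intro k hk
  have hlne : l ≠ [] := by
    intro h0; subst h0; simp at hv
  have htkne : l.take k ≠ [] := by
    cases l with
    | nil => exact absurd rfl hlne
    | cons a t => cases k with
      | zero => omega
      | succ k' => simp
  set tk := l.take k with htk
  have htkp : tk <+: l := List.take_prefix k l
  have hfA : tk.filter qf <+: l.filter qf := htkp.filter _
  have hfB : tk.filter (fun x => !qf x) <+: l.filter (fun x => !qf x) := htkp.filter _
  set kA := (tk.filter qf).length with hkA
  set kB := (tk.filter (fun x => !qf x)).length with hkB
  have eA : tk.filter qf = (l.filter qf).take kA := List.prefix_iff_eq_take.mp hfA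
  have eB : tk.filter (fun x => !qf x) = (l.filter (fun x => !qf x)).take kB :=
    List.prefix_iff_eq_take.mp hfB
  have hsplit : {x | x ∈ tk} =
      {x | x ∈ tk.filter qf} ∪ {x | x ∈ tk.filter (fun x => !qf x)} := by
    ext z
    simp only [Set.mem_union, Set.mem_setOf_eq, List.mem_filter]
    by_cases hz : qf z = true <;> simp [hz]
  by_cases hA0 : tk.filter qf = []
  · have hB1 : 1 ≤ kB := by
      obtain ⟨a, ha⟩ := List.exists_mem_of_ne_nil tk htkne
      have haq : qf a = false := by
        rw [← Bool.not_eq_true]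
        intro hc
        have : a ∈ tk.filter qf := List.mem_filter.mpr ⟨ha, hc⟩
        simp [hA0] at this
      have hmem : a ∈ tk.filter (fun x => !qf x) := List.mem_filter.mpr ⟨ha, by simp [haq]⟩
      have := List.length_pos_iff.mpr (List.ne_nil_of_mem hmem)
      omega
    have hset2 : {x | x ∈ tk} = {x | x ∈ (l.filter (fun x => !qf x)).take kB} := by
      rw [hsplit, hA0, ← eB]; simp
    rw [hset2]
    exact h2 kB hB1
  · by_cases hB0 : tk.filter (fun x => !qf x) = []
    · have hA1 : 1 ≤ kA := by
        have := List.length_pos_iff.mpr hA0; omega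
      have hset2 : {x | x ∈ tk} = {x | x ∈ (l.filter qf).take kA} := by
        rw [hsplit, hB0, ← eA]; simp
      rw [hset2]
      exact h1 kA hA1
    · have hA1 : 1 ≤ kA := by have := List.length_pos_iff.mpr hA0; omega
      have hB1 : 1 ≤ kB := by have := List.length_pos_iff.mpr hB0; omega
      have cA := h1 kA hA1
      have cB := h2 kB hB1
      have hvA : v ∈ {x | x ∈ (l.filter qf).take kA} := head_mem_take hA1 hv
      have hpB : p ∈ {x | x ∈ (l.filter (fun x => !qf x)).take kB} := head_mem_take hB1 hp
      have hset2 : {x | x ∈ tk} = {x | x ∈ (l.filter qf).take kA} ∪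
          {x | x ∈ (l.filter (fun x => !qf x)).take kB} := by
        rw [hsplit, eA, eB]
      rw [hset2]
      exact connected_induce_union cA.preconnected cB.preconnected hvA hpB hadj

/-! ### Good lists -/

def Good (G : SimpleGraph V) (s : Set V) (r : V) (l : List V) : Prop :=
  l.Nodup ∧ (∀ x, x ∈ l ↔ x ∈ s) ∧ l.head? = some r ∧ PrefConn G l

lemma split_iff {A : Set V} {v p : V} {qf : V → Bool} (hq : ∀ x, qf x = true ↔ x ∈ A)
    (hv : v ∈ A) (hp : p ∉ A) (hadj : G.Adj v p)
    (hcross : ∀ ⦃x y : V⦄, G.Adj x y → x ∈ A → y ∉ A → x = v ∧ y = p)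
    (l : List V) (hhd : l.head? = some v) :
    IsHistory G l ↔
      Good G A v (l.filter qf) ∧ Good G Aᶜ p (l.filter (fun x => !qf x)) := by
  have hq' : ∀ x, (!qf x) = true ↔ x ∈ Aᶜ := by
    intro x
    rw [Set.mem_compl_iff, ← hq x]
    simp
  have hcross' : ∀ ⦃x y : V⦄, G.Adj x y → x ∈ Aᶜ → y ∉ Aᶜ → x = p ∧ y = v := by
    intro x y hxy hx hy
    have h0 := hcross (G.adj_symm hxy) (Set.not_notMem.mp hy) hx
    exact ⟨h0.2, h0.1⟩
  constructor
  · rintro ⟨hnd, hfull, hpc⟩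
    have hpc : PrefConn G l := hpc
    have hvq : qf v = true := (hq v).mpr hv
    have hneA : l.filter qf ≠ [] :=
      List.ne_nil_of_mem (List.mem_filter.mpr ⟨hfull v, hvq⟩)
    have hneB : l.filter (fun x => !qf x) ≠ [] := by
      have hpq : (!qf p) = true := (hq' p).mpr hp
      exact List.ne_nil_of_mem (List.mem_filter.mpr ⟨hfull p, hpq⟩)
    obtain ⟨b, hb⟩ : ∃ b, (l.filter (fun x => !qf x)).head? = some b := by
      cases hfB : l.filter (fun x => !qf x) with
      | nil => exact absurd hfB hneB
      | cons a t => exact ⟨a, by simp⟩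
    have hbp : b = p := head_filter_eq hcross hq hpc hhd hv hb
    refine ⟨⟨hnd.filter _, ?_, head?_filter hhd hvq,
             PrefConn.filter' hcross hq hpc hneA⟩,
            ⟨hnd.filter _, ?_, hbp ▸ hb, PrefConn.filter' hcross' hq' hpc hneB⟩⟩
    · intro x; simp [List.mem_filter, hfull x, hq x]
    · intro x; simp [List.mem_filter, hfull x, hq' x]
  · rintro ⟨⟨ndA, memA, hdA, pcA⟩, ⟨ndB, memB, hdB, pcB⟩⟩
    refine ⟨?_, ?_, PrefConn.join pcA pcB hdA hdB hadj⟩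
    · rw [List.nodup_iff_count_le_one]
      intro a
      by_cases ha : qf a = true
      · rw [← List.count_filter (l := l) ha]
        exact List.nodup_iff_count_le_one.mp ndA a
      · have ha' : (!qf a) = true := by simp [Bool.not_eq_true] at ha ⊢; exact ha
        rw [← List.count_filter (p := fun x => !qf x) (l := l) ha']
        exact List.nodup_iff_count_le_one.mp ndB a
    · intro x
      by_cases hx : x ∈ A
      · exact List.mem_of_mem_filter ((memA x).mpr hx)
      · exact List.mem_of_mem_filter ((memB x).mpr hx)

end Aux

/-! ### Interleavings -/

noncomputable def ilv : List V → List V → Finset (List V)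
  | [], ys => {ys}
  | x :: xs, [] => {x :: xs}
  | x :: xs, y :: ys =>
      ((ilv xs (y :: ys)).image (x :: ·)) ∪ ((ilv (x :: xs) ys).image (y :: ·))
termination_by a b => a.length + b.length

lemma mem_ilv_iff (qf : V → Bool) :
    ∀ (l1 l2 : List V), (∀ x ∈ l1, qf x = true) → (∀ x ∈ l2, qf x = false) →
      ∀ l : List V,
        (l ∈ ilv l1 l2 ↔ l.filter qf = l1 ∧ l.filter (fun x => !qf x) = l2) := by
  intro l1 l2
  induction l1, l2 using ilv.induct with
  | case1 ys =>
    intro _ h2 l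
    rw [ilv]
    simp only [Finset.mem_singleton]
    constructor
    · rintro rfl
      constructor
      · rw [List.filter_eq_nil_iff]
        intro x hx
        simp [h2 x hx]
      · rw [List.filter_eq_self]
        intro x hx
        simp [h2 x hx]
    · rintro ⟨hA, hB⟩
      have h0 : ∀ x ∈ l, qf x = false := by
        intro x hx
        have := List.filter_eq_nil_iff.mp hA x hx
        simpa using this
      have : l.filter (fun x => !qf x) = l :=
        List.filter_eq_self.mpr (fun a ha => by simp [h0 a ha])
      rw [← hB, this]
  | case2 x xs =>
    intro h1 _ l
    rw [ilv]
    simp only [Finset.mem_singleton]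
    constructor
    · rintro rfl
      constructor
      · rw [List.filter_eq_self]
        intro a ha
        exact h1 a ha
      · rw [List.filter_eq_nil_iff]
        intro a ha
        simp [h1 a ha]
    · rintro ⟨hA, hB⟩
      have h0 : ∀ a ∈ l, qf a = true := by
        intro a ha
        have := List.filter_eq_nil_iff.mp hB a ha
        simpa using this
      have : l.filter qf = l := List.filter_eq_self.mpr h0
      rw [← hA, this]
  | case3 x xs y ys ih1 ih2 =>
    intro h1 h2 l
    have hx : qf x = true := h1 x (by simp)
    have hy : qf y = false := h2 y (by simp)
    rw [ilv]
    simp only [Finset.mem_union, Finset.mem_image]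
    constructor
    · rintro (⟨l', hl', rfl⟩ | ⟨l', hl', rfl⟩)
      · obtain ⟨hA, hB⟩ := (ih1 (fun a ha => h1 a (by simp [ha])) h2 l').mp hl'
        simp [List.filter_cons, hx, hA, hB]
      · obtain ⟨hA, hB⟩ := (ih2 h1 (fun a ha => h2 a (by simp [ha])) l').mp hl'
        simp [List.filter_cons, hy, hA, hB]
    · rintro ⟨hA, hB⟩
      cases l with
      | nil => simp at hA
      | cons z l' =>
        by_cases hz : qf z = true
        · rw [List.filter_cons_of_pos hz] at hA
          rw [List.filter_cons_of_neg (by simp [hz])] at hB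
          obtain ⟨rfl, hA'⟩ : z = x ∧ l'.filter qf = xs := by
            constructor
            · injection hA
            · injection hA with _ h0
          exact Or.inl ⟨l', (ih1 (fun a ha => h1 a (by simp [ha])) h2 l').mpr ⟨hA', hB⟩, rfl⟩
        · rw [List.filter_cons_of_neg hz] at hA
          rw [List.filter_cons_of_pos (by simp [Bool.not_eq_true] at hz ⊢; exact hz)] at hB
          obtain ⟨rfl, hB'⟩ : z = y ∧ l'.filter (fun x => !qf x) = ys := by
            constructor
            · injection hB
            · injection hB with _ h0
          exact Or.inr ⟨l', (ih2 h1 (fun a ha => h2 a (by simp [ha])) l').mpr ⟨hA, hB'⟩, rfl⟩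

lemma ilv_nil_left (l2 : List V) : ilv ([] : List V) l2 = {l2} := by
  rw [ilv]

lemma ilv_nil_right (l1 : List V) : ilv l1 ([] : List V) = {l1} := by
  cases l1 with
  | nil => rw [ilv]
  | cons x xs => rw [ilv]

lemma card_ilv : ∀ l1 l2 : List V, (∀ x ∈ l1, ∀ y ∈ l2, x ≠ y) →
    (ilv l1 l2).card = (l1.length + l2.length).choose l1.length := by
  intro l1 l2
  induction l1, l2 using ilv.induct with
  | case1 ys => intro _; rw [ilv]; simp
  | case2 x xs => intro _; rw [ilv]; simp
  | case3 x xs y ys ih1 ih2 =>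
    intro h
    have hxy : x ≠ y := h x (by simp) y (by simp)
    rw [ilv]
    have hdisj : Disjoint ((ilv xs (y :: ys)).image (x :: ·))
        ((ilv (x :: xs) ys).image (y :: ·)) := by
      rw [Finset.disjoint_left]
      intro l hl hr
      obtain ⟨l1', _, rfl⟩ := Finset.mem_image.mp hl
      obtain ⟨l2', _, heq⟩ := Finset.mem_image.mp hr
      exact hxy (by injection heq.symm)
    rw [Finset.card_union_of_disjoint hdisj,
        Finset.card_image_of_injective _ (fun a b hab => by injection hab),
        Finset.card_image_of_injective _ (fun a b hab => by injection hab),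
        ih1 (fun a ha b hb => h a (by simp [ha]) b hb),
        ih2 (fun a ha b hb => h a ha b (by simp [hb]))]
    simp only [List.length_cons]
    rw [show xs.length + (ys.length + 1) = (xs.length + ys.length) + 1 by omega,
        show xs.length + 1 + ys.length = (xs.length + ys.length) + 1 by omega,
        show xs.length + 1 + (ys.length + 1) = (xs.length + ys.length) + 1 + 1 by omega]
    rw [Nat.choose_succ_succ (xs.length + ys.length + 1) xs.length]

lemma ilv_filter_head_left (x : V) (xs l2 : List V) (h : ∀ y ∈ l2, x ≠ y) :
    (ilv (x :: xs) l2).filter (fun l => l.head? = some x)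
      = (ilv xs l2).image (x :: ·) := by
  cases l2 with
  | nil =>
    rw [ilv_nil_right, ilv_nil_right]
    rw [Finset.filter_singleton]
    simp
  | cons y ys =>
    have hxy : x ≠ y := h y (by simp)
    rw [ilv, Finset.filter_union]
    have h1 : ((ilv xs (y :: ys)).image (x :: ·)).filter (fun l => l.head? = some x)
        = (ilv xs (y :: ys)).image (x :: ·) := by
      apply Finset.filter_true_of_mem
      intro l hl
      obtain ⟨l', _, rfl⟩ := Finset.mem_image.mp hl
      simp
    have h2 : ((ilv (x :: xs) ys).image (y :: ·)).filter (fun l => l.head? = some x)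
        = ∅ := by
      apply Finset.filter_false_of_mem
      intro l hl
      obtain ⟨l', _, rfl⟩ := Finset.mem_image.mp hl
      simp [hxy.symm]
    rw [h1, h2, Finset.union_empty]

lemma ilv_filter_head_right (y : V) (l1 ys : List V) (h : ∀ x ∈ l1, x ≠ y) :
    (ilv l1 (y :: ys)).filter (fun l => l.head? = some y)
      = (ilv l1 ys).image (y :: ·) := by
  cases l1 with
  | nil =>
    rw [ilv_nil_left, ilv_nil_left]
    rw [Finset.filter_singleton]
    simp
  | cons x xs =>
    have hxy : x ≠ y := h x (by simp)
    rw [ilv, Finset.filter_union]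
    have h1 : ((ilv xs (y :: ys)).image (x :: ·)).filter (fun l => l.head? = some y)
        = ∅ := by
      apply Finset.filter_false_of_mem
      intro l hl
      obtain ⟨l', _, rfl⟩ := Finset.mem_image.mp hl
      simp [hxy]
    have h2 : ((ilv (x :: xs) ys).image (y :: ·)).filter (fun l => l.head? = some y)
        = (ilv (x :: xs) ys).image (y :: ·) := by
      apply Finset.filter_true_of_mem
      intro l hl
      obtain ⟨l', _, rfl⟩ := Finset.mem_image.mp hl
      simp
    rw [h1, h2, Finset.empty_union]

lemma good_finite [Fintype V] (G : SimpleGraph V) (s : Set V) (r : V) :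
    {l : List V | Good G s r l}.Finite := by
  apply (List.finite_length_le V (Fintype.card V)).subset
  intro l hl
  have hnd := hl.1
  simp only [Set.mem_setOf_eq]
  calc l.length = l.toFinset.card := (List.toFinset_card_of_nodup hnd).symm
    _ ≤ Fintype.card V := by
        rw [← Finset.card_univ]
        exact Finset.card_le_univ _

theorem stmt1 [Fintype V] (G : SimpleGraph V) (hG : G.IsTree) (u v p : V)
    (hvu : v ≠ u) (hadj : G.Adj p v)
    (hparent : ∀ q : G.Walk v u, p ∈ q.support) :
    nHist G v * (Fintype.card V - subtreeSize G u v) =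
      nHist G p * subtreeSize G u v := by
  classical
  set A : Set V := {w : V | ∀ q : G.Walk w u, v ∈ q.support} with hA
  have hadjvp : G.Adj v p := hadj.symm
  have hvA : v ∈ A := fun q => q.start_mem_support
  -- every path from p to u avoids v
  have havoid : ∀ r : G.Walk p u, r.IsPath → v ∉ r.support := by
    intro r hr hvsup
    have hpd : p ∈ (r.dropUntil v hvsup).support := hparent _
    have hsupp : r.support =
        (r.takeUntil v hvsup).support ++ (r.dropUntil v hvsup).support.tail := by
      conv_lhs => rw [← Walk.take_spec r hvsup]
      rw [Walk.support_append]
    have hnd := hr.support_nodup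
    rw [hsupp] at hnd
    have hdisj := List.disjoint_of_nodup_append hnd
    have hp1 : p ∈ (r.takeUntil v hvsup).support := Walk.start_mem_support _
    have hp2 : p ∈ (r.dropUntil v hvsup).support.tail := by
      rw [Walk.support_eq_cons (r.dropUntil v hvsup)] at hpd
      rcases List.mem_cons.mp hpd with h | h
      · exact absurd h hadj.ne
      · exact h
    exact hdisj hp1 hp2
  have hpA : p ∉ A := by
    intro hpmem
    obtain ⟨r0⟩ := hG.isConnected.preconnected p u
    exact havoid (r0.toPath : G.Walk p u) r0.toPath.prop
      (hpmem (r0.toPath : G.Walk p u))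
  have hcross : ∀ ⦃x y : V⦄, G.Adj x y → x ∈ A → y ∉ A → x = v ∧ y = p := by
    intro x y hxy hx hy
    have hy' : ∃ q : G.Walk y u, v ∉ q.support := by
      by_contra h
      push_neg at h
      exact hy h
    obtain ⟨qy, hqy⟩ := hy'
    have hxv : x = v := by
      have h0 := hx (Walk.cons hxy qy)
      rw [Walk.support_cons] at h0
      rcases List.mem_cons.mp h0 with h | h
      · exact h.symm
      · exact absurd h hqy
    refine ⟨hxv, ?_⟩
    have hxy2 : G.Adj v y := hxv ▸ hxy
    have hqy' : v ∉ (qy.toPath : G.Walk y u).support :=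
      fun h => hqy (Walk.support_toPath_subset qy h)
    have hc1 : (Walk.cons hxy2 (qy.toPath : G.Walk y u)).IsPath :=
      qy.toPath.prop.cons hqy'
    obtain ⟨r0⟩ := hG.isConnected.preconnected p u
    have hr0 : v ∉ (r0.toPath : G.Walk p u).support := havoid _ r0.toPath.prop
    have hc2 : (Walk.cons hadjvp (r0.toPath : G.Walk p u)).IsPath :=
      r0.toPath.prop.cons hr0
    have huniq : (⟨_, hc1⟩ : G.Path v u) = ⟨_, hc2⟩ := hG.2.path_unique _ _
    have hsup := congrArg (fun q : G.Path v u => (q : G.Walk v u).support) huniq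
    simp only [Walk.support_cons] at hsup
    rw [Walk.support_eq_cons (qy.toPath : G.Walk y u),
        Walk.support_eq_cons (r0.toPath : G.Walk p u)] at hsup
    injection hsup with _ h2
    injection h2 with h3 _
  set pb : V → Bool := fun x => decide (x ∈ A) with hpb
  have hq : ∀ x, pb x = true ↔ x ∈ A := fun x => by simp [hpb]
  have hq' : ∀ x, (!pb x) = true ↔ x ∈ Aᶜ := fun x => by simp [hpb]
  have hcross' : ∀ ⦃x y : V⦄, G.Adj x y → x ∈ Aᶜ → y ∉ Aᶜ → x = p ∧ y = v := by
    intro x y hxy hx hy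
    obtain ⟨h1, h2⟩ := hcross (G.adj_symm hxy) (Set.not_notMem.mp hy) hx
    exact ⟨h2, h1⟩
  have hfinA := good_finite G A v
  have hfinB := good_finite G Aᶜ p
  set FA := hfinA.toFinset with hFA
  set FB := hfinB.toFinset with hFB
  set n := Fintype.card V with hn
  set m := subtreeSize G u v with hm
  have hmA : m = A.toFinset.card := by
    rw [hm]
    unfold subtreeSize
    rw [show {w : V | ∀ q : G.Walk w u, v ∈ q.support} = A from hA.symm]
    rw [Nat.card_coe_set_eq, Set.ncard_eq_toFinset_card']
  have hmcompl : Aᶜ.toFinset.card = n - m := by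
    rw [Set.toFinset_compl, Finset.card_compl, ← hmA, hn]
  have hm1 : 1 ≤ m := by
    rw [hmA]
    exact Finset.card_pos.mpr ⟨v, Set.mem_toFinset.mpr hvA⟩
  have hmn : m < n := by
    have h1 : 1 ≤ Aᶜ.toFinset.card := Finset.card_pos.mpr ⟨p, Set.mem_toFinset.mpr hpA⟩
    have h2 : A.toFinset.card ≤ n := by
      rw [hn, ← Finset.card_univ]
      exact Finset.card_le_univ _
    omega
  have hlenA : ∀ La, Good G A v La → La.length = m := by
    intro La hLa
    have hts : La.toFinset = A.toFinset := by
      ext z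
      simp [List.mem_toFinset, Set.mem_toFinset, hLa.2.1 z]
    rw [← List.toFinset_card_of_nodup hLa.1, hts, ← hmA]
  have hlenB : ∀ Lb, Good G Aᶜ p Lb → Lb.length = n - m := by
    intro Lb hLb
    have hts : Lb.toFinset = Aᶜ.toFinset := by
      ext z
      simp [List.mem_toFinset, Set.mem_toFinset, hLb.2.1 z]
    rw [← List.toFinset_card_of_nodup hLb.1, hts, hmcompl]
  have hGoodA_mem : ∀ {La : List V} {x : V}, Good G A v La → x ∈ La → pb x = true :=
    fun h hx => (hq _).mpr ((h.2.1 _).mp hx)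
  have hGoodB_mem : ∀ {Lb : List V} {x : V}, Good G Aᶜ p Lb → x ∈ Lb → pb x = false := by
    intro Lb x h hx
    have := (h.2.1 x).mp hx
    rw [← Bool.not_eq_true]
    intro hc
    exact this ((hq x).mp hc)
  have hsplit_v : ∀ l : List V, l.head? = some v →
      (IsHistory G l ↔ Good G A v (l.filter pb) ∧ Good G Aᶜ p (l.filter (fun x => !pb x))) :=
    fun l hhd => split_iff hq hvA hpA hadjvp hcross l hhd
  have hsplit_p : ∀ l : List V, l.head? = some p →
      (IsHistory G l ↔ Good G A v (l.filter pb) ∧ Good G Aᶜ p (l.filter (fun x => !pb x))) := by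
    intro l hhd
    have hvA' : p ∈ Aᶜ := hpA
    have hpA' : v ∉ Aᶜ := fun h => h hvA
    have hiff := split_iff (A := Aᶜ) hq' hvA' hpA' (G.adj_symm hadjvp) hcross' l hhd
    rw [hiff, compl_compl]
    have hfilt : l.filter (fun x => !(!pb x)) = l.filter pb :=
      List.filter_congr (fun x _ => by simp)
    rw [hfilt]
    exact and_comm
  set Sv : Finset (List V) := (FA ×ˢ FB).biUnion
    (fun q => (ilv q.1 q.2).filter (fun l => l.head? = some v)) with hSv
  set Sp : Finset (List V) := (FA ×ˢ FB).biUnion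
    (fun q => (ilv q.1 q.2).filter (fun l => l.head? = some p)) with hSp
  have hmemchar : ∀ (r : V), (∀ l : List V, l.head? = some r →
      (IsHistory G l ↔ Good G A v (l.filter pb) ∧ Good G Aᶜ p (l.filter (fun x => !pb x)))) →
      ∀ l : List V,
        (l ∈ (FA ×ˢ FB).biUnion
          (fun q => (ilv q.1 q.2).filter (fun l => l.head? = some r)) ↔
        (IsHistory G l ∧ l.head? = some r)) := by
    intro r hsplit l
    rw [Finset.mem_biUnion]
    constructor
    · rintro ⟨⟨La, Lb⟩, hq0, hl0⟩
      rw [Finset.mem_product] at hq0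
      have hGa : Good G A v La := (hfinA.mem_toFinset).mp hq0.1
      have hGb : Good G Aᶜ p Lb := (hfinB.mem_toFinset).mp hq0.2
      rw [Finset.mem_filter] at hl0
      obtain ⟨hilv, hhead⟩ := hl0
      obtain ⟨hfAe, hfBe⟩ := (mem_ilv_iff pb La Lb
        (fun x hx => hGoodA_mem hGa hx) (fun x hx => hGoodB_mem hGb hx) l).mp hilv
      refine ⟨?_, hhead⟩
      rw [hsplit l hhead]
      exact ⟨hfAe ▸ hGa, hfBe ▸ hGb⟩
    · rintro ⟨hhist, hhead⟩
      obtain ⟨hGa, hGb⟩ := (hsplit l hhead).mp hhist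
      refine ⟨(l.filter pb, l.filter (fun x => !pb x)), ?_, ?_⟩
      · rw [Finset.mem_product]
        exact ⟨hfinA.mem_toFinset.mpr hGa, hfinB.mem_toFinset.mpr hGb⟩
      · rw [Finset.mem_filter]
        exact ⟨(mem_ilv_iff pb _ _
          (fun x hx => hGoodA_mem hGa hx) (fun x hx => hGoodB_mem hGb hx) l).mpr ⟨rfl, rfl⟩,
          hhead⟩
  have hcardgen : ∀ (r : V),
      ((FA ×ˢ FB).biUnion
        (fun q => (ilv q.1 q.2).filter (fun l => l.head? = some r))).card =
      ∑ qp ∈ FA ×ˢ FB, ((ilv qp.1 qp.2).filter (fun l => l.head? = some r)).card := by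
    intro r
    apply Finset.card_biUnion
    rintro ⟨La, Lb⟩ hq1 ⟨La', Lb'⟩ hq2 hne'
    rw [Finset.mem_coe, Finset.mem_product] at hq1 hq2
    have hGa := hfinA.mem_toFinset.mp hq1.1
    have hGb := hfinB.mem_toFinset.mp hq1.2
    have hGa' := hfinA.mem_toFinset.mp hq2.1
    have hGb' := hfinB.mem_toFinset.mp hq2.2
    rw [Function.onFun, Finset.disjoint_left]
    intro l hl1 hl2
    rw [Finset.mem_filter] at hl1 hl2
    obtain ⟨e1, e2⟩ := (mem_ilv_iff pb La Lb
      (fun x hx => hGoodA_mem hGa hx) (fun x hx => hGoodB_mem hGb hx) l).mp hl1.1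
    obtain ⟨e1', e2'⟩ := (mem_ilv_iff pb La' Lb'
      (fun x hx => hGoodA_mem hGa' hx) (fun x hx => hGoodB_mem hGb' hx) l).mp hl2.1
    apply hne'
    rw [Prod.mk.injEq]
    exact ⟨e1.symm.trans e1', e2.symm.trans e2'⟩
  have hNv : nHist G v = Sv.card := by
    have hseteq : {l : List V | IsHistory G l ∧ l.head? = some v} = ↑Sv := by
      ext l
      rw [Finset.mem_coe, hSv, hmemchar v hsplit_v l]
      rfl
    have hcongr : Nat.card {l : List V // IsHistory G l ∧ l.head? = some v}
        = Nat.card ↥(↑Sv : Set (List V)) := Nat.card_congr (Equiv.setCongr hseteq)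
    rw [nHist, hcongr, Nat.card_coe_set_eq, Set.ncard_coe_finset]
  have hNp : nHist G p = Sp.card := by
    have hseteq : {l : List V | IsHistory G l ∧ l.head? = some p} = ↑Sp := by
      ext l
      rw [Finset.mem_coe, hSp, hmemchar p hsplit_p l]
      rfl
    have hcongr : Nat.card {l : List V // IsHistory G l ∧ l.head? = some p}
        = Nat.card ↥(↑Sp : Set (List V)) := Nat.card_congr (Equiv.setCongr hseteq)
    rw [nHist, hcongr, Nat.card_coe_set_eq, Set.ncard_coe_finset]
  have hdisLem : ∀ {La Lb : List V}, Good G A v La → Good G Aᶜ p Lb →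
      ∀ x ∈ La, ∀ y ∈ Lb, x ≠ y := by
    intro La Lb hGa hGb x hx y hy h0
    exact ((hGb.2.1 y).mp hy) (h0 ▸ (hGa.2.1 x).mp hx)
  have hcardv : ∀ qp ∈ FA ×ˢ FB,
      ((ilv qp.1 qp.2).filter (fun l => l.head? = some v)).card = (n-1).choose (m-1) := by
    rintro ⟨La, Lb⟩ hqp
    rw [Finset.mem_product] at hqp
    have hGa := hfinA.mem_toFinset.mp hqp.1
    have hGb := hfinB.mem_toFinset.mp hqp.2
    have hdis := hdisLem hGa hGb
    have hlen1 := hlenA La hGa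
    have hlen2 := hlenB Lb hGb
    obtain ⟨La', rfl⟩ : ∃ La', La = v :: La' := by
      cases La with
      | nil => exact absurd hGa.2.2.1 (by simp)
      | cons a t =>
        have h0 := hGa.2.2.1
        simp at h0
        exact ⟨t, by rw [h0]⟩
    rw [ilv_filter_head_left v La' Lb (fun y hy => hdis v (by simp) y hy)]
    rw [Finset.card_image_of_injective _ (fun a b hab => by injection hab)]
    rw [card_ilv La' Lb (fun x hx y hy => hdis x (by simp [hx]) y hy)]
    have h1 : La'.length = m - 1 := by
      simp only [List.length_cons] at hlen1
      omega
    rw [h1, hlen2]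
    congr 1
    omega
  have hcardp : ∀ qp ∈ FA ×ˢ FB,
      ((ilv qp.1 qp.2).filter (fun l => l.head? = some p)).card = (n-1).choose m := by
    rintro ⟨La, Lb⟩ hqp
    rw [Finset.mem_product] at hqp
    have hGa := hfinA.mem_toFinset.mp hqp.1
    have hGb := hfinB.mem_toFinset.mp hqp.2
    have hdis := hdisLem hGa hGb
    have hlen1 := hlenA La hGa
    have hlen2 := hlenB Lb hGb
    obtain ⟨Lb', rfl⟩ : ∃ Lb', Lb = p :: Lb' := by
      cases Lb with
      | nil => exact absurd hGb.2.2.1 (by simp)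
      | cons a t =>
        have h0 := hGb.2.2.1
        simp at h0
        exact ⟨t, by rw [h0]⟩
    rw [ilv_filter_head_right p La Lb' (fun x hx => hdis x hx p (by simp))]
    rw [Finset.card_image_of_injective _ (fun a b hab => by injection hab)]
    rw [card_ilv La Lb' (fun x hx y hy => hdis x hx y (by simp [hy]))]
    have h2 : Lb'.length = n - m - 1 := by
      simp only [List.length_cons] at hlen2
      omega
    rw [h2, hlen1]
    congr 1
    omega
  have hSvcard : Sv.card = (FA.card * FB.card) * (n-1).choose (m-1) := by
    rw [hSv, hcardgen v, Finset.sum_congr rfl hcardv, Finset.sum_const,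
        Finset.card_product, smul_eq_mul]
  have hSpcard : Sp.card = (FA.card * FB.card) * (n-1).choose m := by
    rw [hSp, hcardgen p, Finset.sum_congr rfl hcardp, Finset.sum_const,
        Finset.card_product, smul_eq_mul]
  rw [hNv, hNp, hSvcard, hSpcard]
  have hid := Nat.choose_succ_right_eq (n-1) (m-1)
  rw [show m - 1 + 1 = m by omega, show n - 1 - (m - 1) = n - m by omega] at hid
  rw [mul_assoc, mul_assoc, ← hid]
  ring
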